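/- Let B ≥ 2 be an integer and n ≥ 1. Let v = (v_0,…,v_n) ∈ Δ_n be such that (B−1)·v_k is an integer for every k, and let x = (x_0,…,x_n) ∈ Δ_n be a point that is not a vertex of Δ_n. Then ∑_{k=0}^n H_B((x_k + (B−1)v_k)/B) = 1 + (1/B)·∑_{k=0}^n H_B(x_k). -/

import Mathlib

open scoped BigOperators

/-- `H_B(x) = ∑_{k=0}^∞ {B^k x}/B^k` where `{y}` is the fractional part. -/
noncomputable def HB (B : ℕ) (x : ℝ) : ℝ :=
  ∑' k : ℕ, Int.fract ((B : ℝ) ^ k * x) / (B : ℝ) ^ k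

lemma summable_HB (B : ℕ) (hB : 2 ≤ B) (y : ℝ) :
    Summable (fun k : ℕ => Int.fract ((B : ℝ) ^ k * y) / (B : ℝ) ^ k) := by
  have hB1 : (1 : ℝ) < B := by exact_mod_cast lt_of_lt_of_le one_lt_two hB
  have hBpos : (0 : ℝ) < B := by linarith
  have hg : Summable (fun k : ℕ => (1 / (B : ℝ)) ^ k) :=
    summable_geometric_of_lt_one (by positivity) (by rw [div_lt_one hBpos]; linarith)
  have h1 : ∀ k : ℕ, 0 ≤ Int.fract ((B : ℝ) ^ k * y) / (B : ℝ) ^ k := fun k =>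
    div_nonneg (Int.fract_nonneg _) (by positivity)
  have h2 : ∀ k : ℕ, Int.fract ((B : ℝ) ^ k * y) / (B : ℝ) ^ k ≤ (1 / (B : ℝ)) ^ k := by
    intro k
    rw [one_div_pow]
    exact div_le_div₀ zero_le_one (Int.fract_lt_one _).le (by positivity) le_rfl
  exact Summable.of_nonneg_of_le h1 h2 hg

lemma HB_shift (B : ℕ) (hB : 2 ≤ B) (x : ℝ) (m : ℤ) :
    HB B ((x + (m : ℝ)) / B) = Int.fract ((x + (m : ℝ)) / B) + (1 / B) * HB B x := by
  have hB1 : (1 : ℝ) < B := by exact_mod_cast lt_of_lt_of_le one_lt_two hB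
  have hBne : (B : ℝ) ≠ 0 := by positivity
  unfold HB
  rw [Summable.tsum_eq_zero_add (summable_HB B hB _)]
  simp only [pow_zero, one_mul, div_one]
  congr 1
  have key : ∀ k : ℕ, Int.fract ((B : ℝ) ^ (k + 1) * ((x + (m : ℝ)) / B)) / (B : ℝ) ^ (k + 1)
      = (1 / (B : ℝ)) * (Int.fract ((B : ℝ) ^ k * x) / (B : ℝ) ^ k) := by
    intro k
    have h1 : (B : ℝ) ^ (k + 1) * ((x + (m : ℝ)) / B)
        = (B : ℝ) ^ k * x + (((B : ℤ) ^ k * m : ℤ) : ℝ) := by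
      push_cast
      field_simp
      ring
    rw [h1, Int.fract_add_intCast, pow_succ]
    ring
  simp_rw [key]
  rw [tsum_mul_left]

theorem stmt19 (B n : ℕ) (hB : 2 ≤ B) (hn : 1 ≤ n)
    (v : Fin (n + 1) → ℝ) (hv : v ∈ stdSimplex ℝ (Fin (n + 1)))
    (hvint : ∀ k, ∃ z : ℤ, ((B : ℝ) - 1) * v k = (z : ℝ))
    (x : Fin (n + 1) → ℝ) (hx : x ∈ stdSimplex ℝ (Fin (n + 1)))
    (hxnv : ∀ k : Fin (n + 1), x ≠ fun j => if j = k then (1 : ℝ) else 0) :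
    (∑ k : Fin (n + 1), HB B ((x k + ((B : ℝ) - 1) * v k) / (B : ℝ))) =
      1 + (1 / (B : ℝ)) * ∑ k : Fin (n + 1), HB B (x k) := by
  obtain ⟨hv0, hv1⟩ := hv
  obtain ⟨hx0, hx1⟩ := hx
  have hB1 : (1 : ℝ) < B := by exact_mod_cast lt_of_lt_of_le one_lt_two hB
  have hBpos : (0 : ℝ) < B := by linarith
  -- each coordinate of x is < 1
  have hxlt : ∀ k, x k < 1 := by
    intro k
    rcases lt_or_ge (x k) 1 with h | h
    · exact h
    · exfalso
      have hle : x k ≤ 1 := by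
        calc x k ≤ ∑ j, x j :=
              Finset.single_le_sum (fun j _ => hx0 j) (Finset.mem_univ k)
          _ = 1 := hx1
      have hxk : x k = 1 := le_antisymm hle h
      apply hxnv k
      funext j
      by_cases hj : j = k
      · simp [hj, hxk]
      · simp only [hj, if_false]
        have hsum : ∑ i ∈ Finset.univ.erase k, x i = 0 := by
          have h2 := Finset.sum_erase_add Finset.univ x (Finset.mem_univ k)
          rw [hx1, hxk] at h2
          linarith
        exact (Finset.sum_eq_zero_iff_of_nonneg (fun i _ => hx0 i)).mp hsum j
          (Finset.mem_erase.mpr ⟨hj, Finset.mem_univ j⟩)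
  have hvle : ∀ k, v k ≤ 1 := by
    intro k
    calc v k ≤ ∑ j, v j :=
          Finset.single_le_sum (fun j _ => hv0 j) (Finset.mem_univ k)
      _ = 1 := hv1
  -- the fractional part of each shifted term is itself
  have hfract : ∀ k, Int.fract ((x k + ((B : ℝ) - 1) * v k) / B)
      = (x k + ((B : ℝ) - 1) * v k) / B := by
    intro k
    apply Int.fract_eq_self.mpr
    constructor
    · apply div_nonneg _ hBpos.le
      have := hv0 k
      have := hx0 k
      nlinarith
    · rw [div_lt_one hBpos]
      have h1 : ((B : ℝ) - 1) * v k ≤ (B : ℝ) - 1 := by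
        nlinarith [hvle k, hv0 k]
      nlinarith [hxlt k]
  -- apply the shift identity
  have hshift : ∀ k, HB B ((x k + ((B : ℝ) - 1) * v k) / B)
      = (x k + ((B : ℝ) - 1) * v k) / B + (1 / B) * HB B (x k) := by
    intro k
    obtain ⟨z, hz⟩ := hvint k
    have hf := hfract k
    rw [hz] at hf
    rw [hz, HB_shift B hB (x k) z, hf]
  simp_rw [hshift]
  rw [Finset.sum_add_distrib, ← Finset.sum_div, ← Finset.mul_sum]
  congr 1
  have : ∑ k : Fin (n + 1), (x k + ((B : ℝ) - 1) * v k)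
      = ∑ k : Fin (n + 1), x k + ((B : ℝ) - 1) * ∑ k : Fin (n + 1), v k := by
    rw [Finset.sum_add_distrib, Finset.mul_sum]
  rw [this, hx1, hv1]
  field_simp
  ring
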